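/- Let A be an abelian category. Suppose given commutative quadrangles Q = (f : A ⟶ B, g : A ⟶ C, h : B ⟶ D, k : C ⟶ D) and Q' = (f' : A' ⟶ B', g' : A' ⟶ C', h' : B' ⟶ D', k' : C' ⟶ D') and a morphism of quadrangles α : A ⟶ A', β : B ⟶ B', γ : C ⟶ C', δ : D ⟶ D' satisfying f ≫ β = α ≫ f', g ≫ γ = α ≫ g', h ≫ δ = β ≫ h', k ≫ δ = γ ≫ k'. (1) If Q is a pushout and Q' is a weak square, then the quadrangle formed by the cokernels of α, β, γ, δ with the induced morphisms (cokernel.map) is a weak square. (2) If Q is a weak square and Q' is a pullback, then the quadrangle formed by the kernels of α, β, γ, δ with the induced morphisms (kernel.map) is a weak square. -/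
import Mathlib


open CategoryTheory CategoryTheory.Limits

/-- A commutative quadrangle `(f, g, h, k)` (with `f ≫ h = g ≫ k`) in an abelian category is a
*weak square* if its diagonal sequence `A ⟶ B ⊞ C ⟶ D`, with first morphism `biprod.lift f g`
and second morphism `biprod.desc h (-k)`, is exact at `B ⊞ C`. -/
def IsWeakSquare {A : Type*} [Category A] [Abelian A] {W X Y Z : A}
    (f : W ⟶ X) (g : W ⟶ Y) (h : X ⟶ Z) (k : Y ⟶ Z) : Prop :=
  ∃ w : biprod.lift f g ≫ biprod.desc h (-k) = 0,
    (ShortComplex.mk (biprod.lift f g) (biprod.desc h (-k)) w).Exact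

/-- A commutative quadrangle is a *pullback* if it is a weak square and `biprod.lift f g` is a
monomorphism. -/
def IsPullbackSquare {A : Type*} [Category A] [Abelian A] {W X Y Z : A}
    (f : W ⟶ X) (g : W ⟶ Y) (h : X ⟶ Z) (k : Y ⟶ Z) : Prop :=
  IsWeakSquare f g h k ∧ Mono (biprod.lift f g)

/-- A commutative quadrangle is a *pushout* if it is a weak square and `biprod.desc h (-k)` is
an epimorphism. -/
def IsPushoutSquare {A : Type*} [Category A] [Abelian A] {W X Y Z : A}
    (f : W ⟶ X) (g : W ⟶ Y) (h : X ⟶ Z) (k : Y ⟶ Z) : Prop :=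
  IsWeakSquare f g h k ∧ Epi (biprod.desc h (-k))

open CategoryTheory.Abelian CategoryTheory.Abelian.Pseudoelement

attribute [local instance] CategoryTheory.Abelian.Pseudoelement.objectToSort
  CategoryTheory.Abelian.Pseudoelement.homToFun

/-- Given a morphism `(α, β, γ, δ)` of commutative quadrangles `Q = (f, g, h, k)` and
`Q' = (f', g', h', k')`:
(1) if `Q` is a pushout and `Q'` is a weak square, then the quadrangle of cokernels (with the
induced morphisms `cokernel.map`) is a weak square;
(2) if `Q` is a weak square and `Q'` is a pullback, then the quadrangle of kernels (with the
induced morphisms `kernel.map`) is a weak square. -/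
theorem weakSquare_of_kernels_and_cokernels {A : Type*} [Category A] [Abelian A]
    {W X Y Z W' X' Y' Z' : A}
    (f : W ⟶ X) (g : W ⟶ Y) (h : X ⟶ Z) (k : Y ⟶ Z)
    (f' : W' ⟶ X') (g' : W' ⟶ Y') (h' : X' ⟶ Z') (k' : Y' ⟶ Z')
    (commQ : f ≫ h = g ≫ k) (commQ' : f' ≫ h' = g' ≫ k')
    (α : W ⟶ W') (β : X ⟶ X') (γ : Y ⟶ Y') (δ : Z ⟶ Z')
    (hf : f ≫ β = α ≫ f') (hg : g ≫ γ = α ≫ g')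
    (hh : h ≫ δ = β ≫ h') (hk : k ≫ δ = γ ≫ k') :
    (IsPushoutSquare f g h k → IsWeakSquare f' g' h' k' →
       IsWeakSquare (cokernel.map α β f f' hf.symm) (cokernel.map α γ g g' hg.symm)
         (cokernel.map β δ h h' hh.symm) (cokernel.map γ δ k k' hk.symm)) ∧
    (IsWeakSquare f g h k → IsPullbackSquare f' g' h' k' →
       IsWeakSquare (kernel.map α β f f' hf.symm) (kernel.map α γ g g' hg.symm)
         (kernel.map β δ h h' hh.symm) (kernel.map γ δ k k' hk.symm)) := by
  constructor
  · -- cokernels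
    rintro ⟨⟨w₁, hex₁⟩, hepi⟩ ⟨w₂, hex₂⟩
    haveI := hepi
    have hv : biprod.map (cokernel.π β) (cokernel.π γ) ≫
        biprod.desc (cokernel.map β δ h h' hh.symm) (-(cokernel.map γ δ k k' hk.symm)) =
        biprod.desc h' (-k') ≫ cokernel.π δ := by
      ext <;> simp [cokernel.map]
    have he : cokernel.π α ≫ biprod.lift (cokernel.map α β f f' hf.symm)
        (cokernel.map α γ g g' hg.symm) =
        biprod.lift f' g' ≫ biprod.map (cokernel.π β) (cokernel.π γ) := by
      ext <;> simp [cokernel.map]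
    have hzz : biprod.map β γ ≫ biprod.map (cokernel.π β) (cokernel.π γ) = 0 := by
      ext <;> simp
    have hδcomm : biprod.desc h (-k) ≫ δ = biprod.map β γ ≫ biprod.desc h' (-k') := by
      ext <;> simp [hh, hk]
    have w₀ : biprod.lift (cokernel.map α β f f' hf.symm) (cokernel.map α γ g g' hg.symm) ≫
        biprod.desc (cokernel.map β δ h h' hh.symm) (-(cokernel.map γ δ k k' hk.symm)) = 0 := by
      rw [← cancel_epi (cokernel.π α), comp_zero, ← Category.assoc, he, Category.assoc, hv,
        ← Category.assoc, w₂, zero_comp]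
    refine ⟨w₀, exact_of_pseudo_exact _ ?_⟩
    intro x hx
    obtain ⟨p, hp⟩ := pseudo_surjective_of_epi (biprod.map (cokernel.π β) (cokernel.π γ)) x
    have h1 : (cokernel.π δ) ((biprod.desc h' (-k')) p) = 0 := by
      rw [← Pseudoelement.comp_apply, ← hv, Pseudoelement.comp_apply, hp]
      exact hx
    have hδexact : (ShortComplex.mk δ (cokernel.π δ) (cokernel.condition δ)).Exact :=
      ShortComplex.exact_of_g_is_cokernel _ (cokernelIsCokernel δ)
    obtain ⟨z, hz1⟩ := pseudo_exact_of_exact hδexact _ h1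
    obtain ⟨y, hy⟩ := pseudo_surjective_of_epi (biprod.desc h (-k)) z
    have heq : (biprod.desc h' (-k')) p = (biprod.desc h' (-k')) ((biprod.map β γ) y) := by
      rw [← Pseudoelement.comp_apply, ← hδcomm, Pseudoelement.comp_apply, hy, hz1]
    obtain ⟨w, hw0, hwp⟩ := sub_of_eq_image (biprod.desc h' (-k')) p _ heq
    obtain ⟨a', ha'⟩ := pseudo_exact_of_exact hex₂ w hw0
    refine ⟨(cokernel.π α) a', ?_⟩
    show (biprod.lift (cokernel.map α β f f' hf.symm) (cokernel.map α γ g g' hg.symm))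
        ((cokernel.π α) a') = x
    rw [← Pseudoelement.comp_apply, he, Pseudoelement.comp_apply, ha', ← hp]
    exact hwp _ _ (by rw [← Pseudoelement.comp_apply, hzz]; exact zero_apply _ _)
  · -- kernels
    rintro ⟨w₁, hex₁⟩ ⟨⟨w₂, hex₂⟩, hmono⟩
    haveI := hmono
    have hι : biprod.lift (kernel.map α β f f' hf.symm) (kernel.map α γ g g' hg.symm) ≫
        biprod.map (kernel.ι β) (kernel.ι γ) = kernel.ι α ≫ biprod.lift f g := by
      ext <;> simp [kernel.map]
    have hm : biprod.desc (kernel.map β δ h h' hh.symm) (-(kernel.map γ δ k k' hk.symm)) ≫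
        kernel.ι δ = biprod.map (kernel.ι β) (kernel.ι γ) ≫ biprod.desc h (-k) := by
      ext <;> simp [kernel.map]
    have hzz : biprod.map (kernel.ι β) (kernel.ι γ) ≫ biprod.map β γ = 0 := by
      ext <;> simp
    have hα : α ≫ biprod.lift f' g' = biprod.lift f g ≫ biprod.map β γ := by
      ext <;> simp [hf, hg]
    have w₀ : biprod.lift (kernel.map α β f f' hf.symm) (kernel.map α γ g g' hg.symm) ≫
        biprod.desc (kernel.map β δ h h' hh.symm) (-(kernel.map γ δ k k' hk.symm)) = 0 := by
      rw [← cancel_mono (kernel.ι δ), zero_comp, Category.assoc, hm, ← Category.assoc, hι,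
        Category.assoc, w₁, comp_zero]
    refine ⟨w₀, exact_of_pseudo_exact _ ?_⟩
    intro x hx
    have h1 : (biprod.desc h (-k)) ((biprod.map (kernel.ι β) (kernel.ι γ)) x) = 0 := by
      rw [← Pseudoelement.comp_apply, ← hm, Pseudoelement.comp_apply]
      rw [show (biprod.desc (kernel.map β δ h h' hh.symm)
        (-(kernel.map γ δ k k' hk.symm))) x = 0 from hx]
      exact apply_zero _
    obtain ⟨w0, hw0⟩ := pseudo_exact_of_exact hex₁ _ h1
    have h2 : (biprod.lift f' g') ((α : W ⟶ W') w0) = 0 := by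
      rw [← Pseudoelement.comp_apply, hα, Pseudoelement.comp_apply, hw0, ← Pseudoelement.comp_apply, hzz]
      exact zero_apply _ _
    have h3 : (α : W ⟶ W') w0 = 0 :=
      zero_of_map_zero _ (pseudo_injective_of_mono (biprod.lift f' g')) _ h2
    have hkexact : (ShortComplex.mk (kernel.ι α) α (kernel.condition α)).Exact :=
      ShortComplex.exact_of_f_is_kernel _ (kernelIsKernel α)
    obtain ⟨a0, ha0⟩ := pseudo_exact_of_exact hkexact _ h3
    refine ⟨a0, pseudo_injective_of_mono (biprod.map (kernel.ι β) (kernel.ι γ)) ?_⟩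
    rw [← Pseudoelement.comp_apply, hι, Pseudoelement.comp_apply, ha0, hw0]
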